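/- Let X be a set, let < be a linear order on X, let K < ω, and let A_0, …, A_{K−1} be subsets of X such that for each i < K, either A_i or X \ A_i is a <-convex subset of X. Then every set belonging to the Boolean algebra of subsets of X generated by {A_0, …, A_{K−1}} (the smallest collection of subsets of X containing A_0, …, A_{K−1} and closed under complements and finite unions and intersections) is a union of at most K + 1 <-convex subsets of X. -/

import Mathlib

/-- `S` is convex with respect to the strict order `r`. -/
def IsRConvex {X : Type*} (r : X → X → Prop) (S : Set X) : Prop :=
  ∀ a b c : X, r a b → r b c → a ∈ S → c ∈ S → b ∈ S

/-- `S` is a union of at most `K` `r`-convex subsets of `X`. -/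
def UnionOfAtMostConvex {X : Type*} (r : X → X → Prop) (K : ℕ) (S : Set X) : Prop :=
  ∃ C : Fin K → Set X, (∀ i, IsRConvex r (C i)) ∧ S = ⋃ i, C i

/-- The Boolean algebra of subsets of `X` generated by a family `G`: the smallest
collection containing `G` and closed under complements and (binary) unions and
intersections. -/
inductive GenBoolAlg {X : Type*} (G : Set (Set X)) : Set X → Prop
  | base {A : Set X} : A ∈ G → GenBoolAlg G A
  | compl {A : Set X} : GenBoolAlg G A → GenBoolAlg G Aᶜ
  | union {A B : Set X} : GenBoolAlg G A → GenBoolAlg G B → GenBoolAlg G (A ∪ B)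
  | inter {A B : Set X} : GenBoolAlg G A → GenBoolAlg G B → GenBoolAlg G (A ∩ B)

section Part1
variable {X : Type*} [LinearOrder X] (S : Set X)

/-- x and y are in the same convex component of S -/
def ERel (x y : X) : Prop := ∀ z, ((x ≤ z ∧ z ≤ y) ∨ (y ≤ z ∧ z ≤ x)) → z ∈ S

variable {S}

lemma ERel.symm {x y : X} (h : ERel S x y) : ERel S y x := fun z hz => h z hz.symm

lemma ERel.mem_left {x y : X} (h : ERel S x y) : x ∈ S := by
  rcases le_total x y with h' | h'
  · exact h x (Or.inl ⟨le_refl x, h'⟩)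
  · exact h x (Or.inr ⟨h', le_refl x⟩)

lemma ERel.trans {x y z : X} (h1 : ERel S x y) (h2 : ERel S y z) : ERel S x z := by
  intro w hw
  rcases le_total w y with h' | h'
  · rcases hw with ⟨h1', h2'⟩ | ⟨h1', h2'⟩
    · exact h1 w (Or.inl ⟨h1', h'⟩)
    · exact h2 w (Or.inr ⟨h1', h'⟩)
  · rcases hw with ⟨h1', h2'⟩ | ⟨h1', h2'⟩
    · exact h2 w (Or.inl ⟨h', h2'⟩)
    · exact h1 w (Or.inr ⟨h', h2'⟩)

lemma ERel.refl {x : X} (h : x ∈ S) : ERel S x x := by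
  intro z hz
  rcases hz with ⟨h1, h2⟩ | ⟨h1, h2⟩ <;> rwa [le_antisymm h2 h1]

/-- the class of x -/
def EClass (S : Set X) (x : X) : Set X := {y | ERel S x y}

lemma EClass_convex (x : X) : IsRConvex (· < ·) (EClass S x) := by
  intro a b c hab hbc ha hc
  have hac : ERel S a c := (ERel.symm ha).trans hc
  intro w hw
  rcases hw with ⟨h1, h2⟩ | ⟨h1, h2⟩
  · rcases le_total w a with h' | h'
    · exact ha w (Or.inl ⟨h1, h'⟩)
    · exact hac w (Or.inl ⟨h', h2.trans (le_of_lt hbc)⟩)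
  · rcases le_total w c with h' | h'
    · exact hac w (Or.inl ⟨(le_of_lt hab).trans h1, h'⟩)
    · exact hc w (Or.inr ⟨h', h2⟩)

lemma EClass_subset (x : X) : EClass S x ⊆ S := fun _ h => (ERel.symm h).mem_left

lemma EClass_eq {x y : X} (h : ERel S x y) : EClass S x = EClass S y := by
  ext z
  exact ⟨fun hz => (h.symm).trans hz, fun hz => h.trans hz⟩

/-- If there is no alternating chain of length m, then S is a union of ≤ m convex sets. -/
lemma key1 (m : ℕ) (S : Set X)
    (h : ¬ ∃ (a : Fin (m+1) → X) (b : Fin m → X),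
      (∀ i : Fin m, a i.castSucc < b i ∧ b i < a i.succ) ∧
      (∀ i, a i ∈ S) ∧ (∀ i, b i ∉ S)) :
    UnionOfAtMostConvex (· < ·) m S := by
  classical
  -- no finset of m+1 distinct classes
  have hF : ∀ F : Finset X, ↑F ⊆ S → (∀ x ∈ F, ∀ y ∈ F, x ≠ y → ¬ ERel S x y) →
      F.card ≤ m := by
    intro F hFS hFrel
    by_contra hcard
    push_neg at hcard
    obtain ⟨G, hGF, hGcard⟩ := Finset.exists_subset_card_eq (Nat.succ_le_of_lt hcard)
    -- G has card m+1; order it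
    let e := G.orderIsoOfFin hGcard
    set a : Fin (m+1) → X := fun i => (e i : X) with ha
    have hamono : StrictMono a := fun i j hij => by
      exact_mod_cast e.strictMono hij
    have haS : ∀ i, a i ∈ S := fun i => hFS (hGF (e i).2)
    have hne : ∀ i j : Fin (m+1), i ≠ j → ¬ ERel S (a i) (a j) := by
      intro i j hij
      apply hFrel _ (hGF (e i).2) _ (hGF (e j).2)
      intro hEq
      exact hij (e.injective (Subtype.ext hEq))
    -- for each i : Fin m get b i
    have hb : ∀ i : Fin m, ∃ z, a i.castSucc < z ∧ z < a i.succ ∧ z ∉ S := by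
      intro i
      have hlt : a i.castSucc < a i.succ := hamono (Fin.castSucc_lt_succ : i.castSucc < i.succ)
      have := hne i.castSucc i.succ (Fin.castSucc_lt_succ : i.castSucc < i.succ).ne
      by_contra hno
      push_neg at hno
      apply this
      intro z hz
      rcases hz with ⟨h1, h2⟩ | ⟨h1, h2⟩
      · rcases h1.lt_or_eq with h1' | h1'
        · rcases h2.lt_or_eq with h2' | h2'
          · exact hno z h1' h2'
          · rw [h2']; exact haS _
        · rw [← h1']; exact haS _
      · exact absurd (h1.trans h2) (not_le.mpr hlt)
    choose b hb1 hb2 hb3 using hb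
    exact h ⟨a, b, fun i => ⟨hb1 i, hb2 i⟩, haS, hb3⟩
  -- set of classes
  have hFC : ∀ FC : Finset (Set X), ↑FC ⊆ EClass S '' S → FC.card ≤ m := by
    intro FC hsub
    have hrep : ∀ C ∈ FC, ∃ x, x ∈ S ∧ EClass S x = C := by
      intro C hC
      obtain ⟨x, hx, hxC⟩ := hsub hC
      exact ⟨x, hx, hxC⟩
    choose x hx1 hx2 using hrep
    set P : Finset X := FC.attach.image (fun C => x C.1 C.2) with hP
    have hinj : ∀ (C : {C // C ∈ FC}) (D : {D // D ∈ FC}),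
        x C.1 C.2 = x D.1 D.2 → C = D := by
      intro C D hCD
      apply Subtype.ext
      rw [← hx2 C.1 C.2, ← hx2 D.1 D.2, hCD]
    have hPcard : P.card = FC.card := by
      rw [hP, Finset.card_image_of_injective _ (fun C D => hinj C D), Finset.card_attach]
    rw [← hPcard]
    apply hF
    · intro u hu
      simp only [hP, Finset.coe_image, Set.mem_image] at hu
      obtain ⟨C, _, rfl⟩ := hu
      exact hx1 C.1 C.2
    · intro u hu v hv huv hrel
      simp only [hP, Finset.mem_image] at hu hv
      obtain ⟨C, hC, rfl⟩ := hu
      obtain ⟨D, hD, rfl⟩ := hv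
      apply huv
      have : EClass S (x C.1 C.2) = EClass S (x D.1 D.2) := EClass_eq hrel
      rw [hx2, hx2] at this
      have : C = D := Subtype.ext this
      rw [this]
  have hfin : (EClass S '' S).Finite := by
    by_contra hinf
    obtain ⟨t, hts, htc⟩ := Set.Infinite.exists_subset_card_eq hinf (m+1)
    have := hFC t hts
    omega
  have hcard : hfin.toFinset.card ≤ m := by
    apply hFC
    simp
  -- build the function
  set L := hfin.toFinset.toList with hL
  have hLlen : L.length ≤ m := by
    rw [hL, Finset.length_toList]; exact hcard
  refine ⟨fun i => L.getD i ∅, ?_, ?_⟩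
  · intro i
    show IsRConvex (· < ·) (L.getD i ∅)
    by_cases hi : (i : ℕ) < L.length
    · have hmem : L.getD i ∅ ∈ L := by
        rw [List.getD_eq_getElem L ∅ hi]; exact List.getElem_mem hi
      rw [hL, Finset.mem_toList, Set.Finite.mem_toFinset] at hmem
      obtain ⟨y, _, hy⟩ := hmem
      rw [← hy]
      exact EClass_convex y
    · rw [List.getD_eq_default _ _ (le_of_not_gt hi)]
      intro a b c _ _ ha _
      exact absurd ha (Set.notMem_empty a)
  · ext z
    simp only [Set.mem_iUnion]
    constructor
    · intro hz
      have hmem : EClass S z ∈ L := by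
        rw [hL, Finset.mem_toList, Set.Finite.mem_toFinset]
        exact ⟨z, hz, rfl⟩
      obtain ⟨i, hi, hgi⟩ := List.mem_iff_getElem.mp hmem
      refine ⟨⟨i, lt_of_lt_of_le hi hLlen⟩, ?_⟩
      have : L.getD i ∅ = EClass S z := by
        rw [List.getD_eq_getElem _ _ hi, hgi]
      rw [this]
      exact ERel.refl hz
    · rintro ⟨i, hzi⟩
      by_cases hi : (i : ℕ) < L.length
      · have hmem : L.getD i ∅ ∈ L := by
          rw [List.getD_eq_getElem L ∅ hi]; exact List.getElem_mem hi
        rw [hL, Finset.mem_toList, Set.Finite.mem_toFinset] at hmem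
        obtain ⟨y, _, hy⟩ := hmem
        rw [← hy] at hzi
        exact EClass_subset y hzi
      · rw [List.getD_eq_default _ _ (le_of_not_gt hi)] at hzi
        exact absurd hzi (Set.notMem_empty z)

end Part1

lemma atom_lemma {X : Type*} {K : ℕ} {A : Fin K → Set X} {S : Set X}
    (hS : GenBoolAlg (Set.range A) S) {x y : X} (hxy : ∀ i, x ∈ A i ↔ y ∈ A i) :
    x ∈ S ↔ y ∈ S := by
  induction hS with
  | base h => obtain ⟨i, rfl⟩ := h; exact hxy i
  | compl _ ih => simp only [Set.mem_compl_iff]; tauto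
  | union _ _ ih1 ih2 => simp only [Set.mem_union]; tauto
  | inter _ _ ih1 ih2 => simp only [Set.mem_inter_iff]; tauto

lemma two_changes_ord {X : Type*} [LinearOrder X] {A : Set X} (hA : IsRConvex (· < ·) A)
    {n : ℕ} {p : Fin (n+1) → X} (hp : StrictMono p) {j k : Fin n} (hjk : j < k)
    (hj : ¬ (p j.castSucc ∈ A ↔ p j.succ ∈ A))
    (hk : ¬ (p k.castSucc ∈ A ↔ p k.succ ∈ A))
    (hstart : p j.castSucc ∈ A ↔ p k.castSucc ∈ A) : False := by
  have hle : p j.succ ≤ p k.castSucc := by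
    apply hp.monotone
    rw [Fin.le_def]
    simp only [Fin.val_succ, Fin.coe_castSucc]
    exact hjk
  by_cases hs : p j.castSucc ∈ A
  · -- exit at j, then k starts in A
    have h1 : p j.succ ∉ A := fun h => hj ⟨fun _ => h, fun _ => hs⟩
    have h2 : p k.castSucc ∈ A := hstart.mp hs
    rcases hle.lt_or_eq with hlt | heq
    · exact h1 (hA _ _ _ (hp (Fin.castSucc_lt_succ : j.castSucc < j.succ)) hlt hs h2)
    · rw [heq] at h1; exact h1 h2
  · -- enter at j, k starts out of A, enter at k
    have h1 : p j.succ ∈ A := by tauto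
    have h2 : p k.castSucc ∉ A := fun h => hs (hstart.mpr h)
    have h3 : p k.succ ∈ A := by tauto
    rcases hle.lt_or_eq with hlt | heq
    · exact h2 (hA _ _ _ hlt (hp (Fin.castSucc_lt_succ : k.castSucc < k.succ)) h1 h3)
    · rw [heq] at h1; exact h2 h1

lemma two_changes {X : Type*} [LinearOrder X] {A : Set X} (hA : IsRConvex (· < ·) A)
    {n : ℕ} {p : Fin (n+1) → X} (hp : StrictMono p) {j k : Fin n} (hjk : j ≠ k)
    (hj : ¬ (p j.castSucc ∈ A ↔ p j.succ ∈ A))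
    (hk : ¬ (p k.castSucc ∈ A ↔ p k.succ ∈ A))
    (hstart : p j.castSucc ∈ A ↔ p k.castSucc ∈ A) : False := by
  rcases hjk.lt_or_gt with h | h
  · exact two_changes_ord hA hp h hj hk hstart
  · exact two_changes_ord hA hp h hk hj hstart.symm

lemma three_changes {X : Type*} [LinearOrder X] {A : Set X} (hA : IsRConvex (· < ·) A)
    {n : ℕ} {p : Fin (n+1) → X} (hp : StrictMono p) {j k l : Fin n}
    (hjk : j ≠ k) (hjl : j ≠ l) (hkl : k ≠ l)
    (hj : ¬ (p j.castSucc ∈ A ↔ p j.succ ∈ A))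
    (hk : ¬ (p k.castSucc ∈ A ↔ p k.succ ∈ A))
    (hl : ¬ (p l.castSucc ∈ A ↔ p l.succ ∈ A)) : False := by
  by_cases h1 : p j.castSucc ∈ A <;> by_cases h2 : p k.castSucc ∈ A <;>
    by_cases h3 : p l.castSucc ∈ A
  all_goals first
    | exact two_changes hA hp hjk hj hk (iff_of_true h1 h2)
    | exact two_changes hA hp hjk hj hk (iff_of_false h1 h2)
    | exact two_changes hA hp hjl hj hl (iff_of_true h1 h3)
    | exact two_changes hA hp hjl hj hl (iff_of_false h1 h3)
    | exact two_changes hA hp hkl hk hl (iff_of_true h2 h3)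
    | exact two_changes hA hp hkl hk hl (iff_of_false h2 h3)



theorem stmt_3 {X : Type*} [LinearOrder X] (K : ℕ) (A : Fin K → Set X)
    (hA : ∀ i, IsRConvex (· < ·) (A i) ∨ IsRConvex (· < ·) (A i)ᶜ) :
    ∀ S : Set X, GenBoolAlg (Set.range A) S →
      UnionOfAtMostConvex (· < ·) (K + 1) S := by
  classical
  intro S hS
  apply key1
  rintro ⟨a, b, hchain, haS, hbS⟩
  -- combined chain p of length 2K+3
  set p : Fin (2*K+2+1) → X := fun j =>
    if h : j.val % 2 = 0 then a ⟨j.val/2, by omega⟩ else b ⟨j.val/2, by omega⟩ with hpdef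
  have hpa : ∀ (j : Fin (2*K+2+1)) (i : Fin (K+1+1)), j.val = 2 * i.val → p j = a i := by
    intro j i hji
    have h0 : j.val % 2 = 0 := by omega
    rw [hpdef]
    simp only
    rw [dif_pos h0]
    congr 1
    apply Fin.ext
    simp only
    omega
  have hpb : ∀ (j : Fin (2*K+2+1)) (i : Fin (K+1)), j.val = 2 * i.val + 1 → p j = b i := by
    intro j i hji
    have h0 : ¬ j.val % 2 = 0 := by omega
    rw [hpdef]
    simp only
    rw [dif_neg h0]
    congr 1
    apply Fin.ext
    simp only
    omega
  have hpsucc : ∀ j : Fin (2*K+2), p j.castSucc < p j.succ := by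
    intro j
    have hjv : j.val < 2*K+2 := j.2
    by_cases h0 : j.val % 2 = 0
    · have hi : j.val / 2 < K + 1 := by omega
      set i : Fin (K+1) := ⟨j.val/2, hi⟩ with hidef
      have e1 : p j.castSucc = a i.castSucc := by
        apply hpa
        simp only [Fin.coe_castSucc, hidef]
        omega
      have e2 : p j.succ = b i := by
        apply hpb
        simp only [Fin.val_succ, hidef]
        omega
      rw [e1, e2]
      exact (hchain i).1
    · have hi : j.val / 2 < K + 1 := by omega
      set i : Fin (K+1) := ⟨j.val/2, hi⟩ with hidef
      have e1 : p j.castSucc = b i := by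
        apply hpb
        simp only [Fin.coe_castSucc, hidef]
        omega
      have e2 : p j.succ = a i.succ := by
        apply hpa
        simp only [Fin.val_succ, Fin.val_succ, hidef]
        omega
      rw [e1, e2]
      exact (hchain i).2
  have hpmono : StrictMono p := Fin.strictMono_iff_lt_succ.mpr hpsucc
  have hpS : ∀ j : Fin (2*K+2+1), (j.val % 2 = 0 → p j ∈ S) ∧ (j.val % 2 ≠ 0 → p j ∉ S) := by
    intro j
    constructor
    · intro h0
      rw [hpa j ⟨j.val/2, by omega⟩ (by simp only; omega)]
      exact haS _
    · intro h0
      rw [hpb j ⟨j.val/2, by omega⟩ (by simp only; omega)]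
      exact hbS _
  -- each adjacent pair is separated by some generator
  have hsep : ∀ j : Fin (2*K+2), ∃ g : Fin K, ¬ (p j.castSucc ∈ A g ↔ p j.succ ∈ A g) := by
    intro j
    by_contra hno
    push_neg at hno
    have hiff : p j.castSucc ∈ S ↔ p j.succ ∈ S :=
      atom_lemma hS hno
    have h1 := hpS j.castSucc
    have h2 := hpS j.succ
    simp only [Fin.coe_castSucc, Fin.val_succ] at h1 h2
    by_cases h0 : j.val % 2 = 0
    · exact (h2.2 (by omega)) (hiff.mp (h1.1 h0))
    · exact (h1.2 h0) (hiff.mpr (h2.1 (by omega)))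
  choose f hf using hsep
  -- pigeonhole: some generator separates three pairs
  have hcard : (Finset.univ : Finset (Fin K)).card * 2 <
      (Finset.univ : Finset (Fin (2*K+2))).card := by
    simp only [Finset.card_univ, Fintype.card_fin]
    omega
  obtain ⟨g, -, hg⟩ := Finset.exists_lt_card_fiber_of_mul_lt_card_of_maps_to
    (fun x _ => Finset.mem_univ (f x)) hcard
  rw [Finset.two_lt_card_iff] at hg
  obtain ⟨j, k, l, hj, hk, hl, hjk, hjl, hkl⟩ := hg
  simp only [Finset.mem_filter, Finset.mem_univ, true_and] at hj hk hl
  have cj : ¬ (p j.castSucc ∈ A g ↔ p j.succ ∈ A g) := hj ▸ hf j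
  have ck : ¬ (p k.castSucc ∈ A g ↔ p k.succ ∈ A g) := hk ▸ hf k
  have cl : ¬ (p l.castSucc ∈ A g ↔ p l.succ ∈ A g) := hl ▸ hf l
  rcases hA g with hconv | hconv
  · exact three_changes hconv hpmono hjk hjl hkl cj ck cl
  · have t : ∀ x y : X, ¬ (x ∈ A g ↔ y ∈ A g) → ¬ (x ∈ (A g)ᶜ ↔ y ∈ (A g)ᶜ) := by
      intro x y h
      simp only [Set.mem_compl_iff]
      tauto
    exact three_changes hconv hpmono hjk hjl hkl (t _ _ cj) (t _ _ ck) (t _ _ cl)
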